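/- Let R be a commutative ring and Γ = R[z,z⁻¹] the Laurent polynomial ring. Define d(φ) = φ − M_z ∘ φ ∘ M_{z⁻¹} for R-linear maps φ : Γ → Γ, and let h be the operator on R-linear endomorphisms of Γ determined on the basis {z^i} by h(ψ)(z^i) = Σ_{j=0}^{i−1} z^j·ψ(z^{i−j}) for i ≥ 0 (in particular h(ψ)(1) = 0) and h(ψ)(z^i) = −Σ_{j=i}^{−1} z^j·ψ(z^{i−j}) for i < 0. Then for every R-linear φ, ψ : Γ → Γ one has h(d(φ)) = φ − M_{φ(1)} and d(h(ψ)) = ψ. Consequently, in the two-term complex End_R(Γ) →d End_R(Γ), h is a chain homotopy between the identity and the projection onto the multiplication operators: the kernel of d is exactly {M_g : g ∈ Γ} ≅ Γ (via φ ↦ φ(1)), and d is surjective. -/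

import Mathlib

open LaurentPolynomial

/-- The differential `d(φ) = φ - M_z ∘ φ ∘ M_{z⁻¹}` on `R`-linear endomorphisms of the
Laurent polynomial ring `Γ = R[z,z⁻¹]`, where `M_g` denotes multiplication by `g`. -/
noncomputable def circleDiff (R : Type*) [CommRing R]
    (φ : LaurentPolynomial R →ₗ[R] LaurentPolynomial R) :
    LaurentPolynomial R →ₗ[R] LaurentPolynomial R :=
  φ - (LinearMap.mulLeft R (T 1)) ∘ₗ φ ∘ₗ (LinearMap.mulLeft R (T (-1)))

section Aux

variable {M : Type*}

lemma aux_Ico_insert {a b : ℤ} (hab : a ≤ b) :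
    insert b (Finset.Ico a b) = Finset.Ico a (b + 1) := by
  ext x
  simp only [Finset.mem_insert, Finset.mem_Ico]
  omega

lemma aux_sum_Ico_succ_top [AddCommMonoid M] (f : ℤ → M) {a b : ℤ} (hab : a ≤ b) :
    ∑ j ∈ Finset.Ico a (b + 1), f j = (∑ j ∈ Finset.Ico a b, f j) + f b := by
  rw [← aux_Ico_insert hab, Finset.sum_insert (by simp), add_comm]

lemma aux_telescope [AddCommGroup M] (f : ℤ → M) {a b : ℤ} (hab : a ≤ b) :
    ∑ j ∈ Finset.Ico a b, (f j - f (j + 1)) = f a - f b := by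
  exact Int.le_induction
    (motive := fun b _ => ∑ j ∈ Finset.Ico a b, (f j - f (j + 1)) = f a - f b)
    (by simp)
    (fun n hn ih => by rw [aux_sum_Ico_succ_top _ hn, ih]; abel) b hab

lemma aux_sum_shift [AddCommMonoid M] (f : ℤ → M) (a b : ℤ) :
    ∑ j ∈ Finset.Ico a b, f (j + 1) = ∑ j ∈ Finset.Ico (a + 1) (b + 1), f j := by
  have himg : (Finset.Ico a b).image (· + 1) = Finset.Ico (a + 1) (b + 1) := by
    ext x
    simp only [Finset.mem_image, Finset.mem_Ico]
    constructor
    · rintro ⟨y, hy, rfl⟩; omega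
    · intro hx; exact ⟨x - 1, by omega, by omega⟩
  rw [← himg, Finset.sum_image (by intro x _ y _ hxy; simpa using hxy)]

lemma aux_Icc_eq_Ico (a : ℤ) : Finset.Icc a (-1 : ℤ) = Finset.Ico a 0 := by
  ext x
  simp only [Finset.mem_Icc, Finset.mem_Ico]
  omega

end Aux

section Main

variable {R : Type*} [CommRing R]

lemma aux_lhom_ext {φ ψ : LaurentPolynomial R →ₗ[R] LaurentPolynomial R}
    (H : ∀ i : ℤ, φ (T i) = ψ (T i)) : φ = ψ := by
  apply AddMonoidAlgebra.lhom_ext'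
  intro a
  apply LinearMap.ext_ring
  have : (AddMonoidAlgebra.single a 1 : LaurentPolynomial R) = T a := rfl
  simpa [AddMonoidAlgebra.lsingle, this] using H a

lemma aux_circleDiff_apply (φ : LaurentPolynomial R →ₗ[R] LaurentPolynomial R) (i : ℤ) :
    circleDiff R φ (T i) = φ (T i) - T 1 * φ (T (i - 1)) := by
  have : (T (-1) : LaurentPolynomial R) * T i = T (i - 1) := by
    rw [← T_add]; ring_nf
  simp [circleDiff, LinearMap.sub_apply, LinearMap.mulLeft_apply, this]

lemma aux_T_one_neg_one : (T 1 : LaurentPolynomial R) * T (-1) = 1 := by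
  rw [← T_add]; norm_num

end Main

/-- In the two-term complex `End_R(Γ) → End_R(Γ)`, with differential
`d(φ) = φ − M_z ∘ φ ∘ M_{z⁻¹}` and `h` the operator determined on the basis `{z^i}` by
`h(ψ)(z^i) = Σ_{j=0}^{i−1} z^j·ψ(z^{i−j})` for `i ≥ 0` and
`h(ψ)(z^i) = −Σ_{j=i}^{−1} z^j·ψ(z^{i−j})` for `i < 0`, one has
`h(d(φ)) = φ − M_{φ(1)}` and `d(h(ψ)) = ψ`; hence `h` is a chain homotopy between the identity
and the projection onto multiplication operators, the kernel of `d` is exactly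
`{M_g : g ∈ Γ} ≅ Γ` (via `φ ↦ φ(1)`), and `d` is surjective. -/
theorem laurent_circle_homotopy (R : Type*) [CommRing R]
    (h : (LaurentPolynomial R →ₗ[R] LaurentPolynomial R) →
      (LaurentPolynomial R →ₗ[R] LaurentPolynomial R))
    (h_nonneg : ∀ (ψ : LaurentPolynomial R →ₗ[R] LaurentPolynomial R) (i : ℤ), 0 ≤ i →
      h ψ (T i) = ∑ j ∈ Finset.Ico (0 : ℤ) i, T j * ψ (T (i - j)))
    (h_neg : ∀ (ψ : LaurentPolynomial R →ₗ[R] LaurentPolynomial R) (i : ℤ), i < 0 →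
      h ψ (T i) = -∑ j ∈ Finset.Icc i (-1 : ℤ), T j * ψ (T (i - j))) :
    (∀ φ, h (circleDiff R φ) = φ - LinearMap.mulLeft R (φ 1)) ∧
    (∀ ψ, circleDiff R (h ψ) = ψ) ∧
    (∀ φ, circleDiff R φ = 0 ↔ ∃ g : LaurentPolynomial R, φ = LinearMap.mulLeft R g) ∧
    (∀ φ, circleDiff R φ = 0 → φ = LinearMap.mulLeft R (φ 1)) ∧
    Function.Surjective (circleDiff R) := by
  -- part 1 : h ∘ d
  have part1 : ∀ φ, h (circleDiff R φ) = φ - LinearMap.mulLeft R (φ 1) := by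
    intro φ
    apply aux_lhom_ext
    intro i
    set f : ℤ → LaurentPolynomial R := fun j => T j * φ (T (i - j)) with hf
    have key' : ∀ j : ℤ, T j * circleDiff R φ (T (i - j)) = f j - f (j + 1) := by
      intro j
      simp only [hf]
      rw [aux_circleDiff_apply, mul_sub]
      congr 1
      rw [← mul_assoc, ← T_add]
      have e1 : (j + 1 : ℤ) = j + 1 := rfl
      rw [show (i - j - 1 : ℤ) = i - (j + 1) by ring, show (j + 1 : ℤ) = j + 1 by ring]
    have hgoalR : (φ - LinearMap.mulLeft R (φ 1)) (T i) = f 0 - f i := by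
      simp only [LinearMap.sub_apply, LinearMap.mulLeft_apply, hf, sub_zero, sub_self,
        T_zero, one_mul]
      rw [mul_comm (φ 1) (T i)]
    rcases le_or_gt 0 i with hi | hi
    · rw [h_nonneg _ i hi, hgoalR, Finset.sum_congr rfl (fun j _ => key' j)]
      exact aux_telescope f hi
    · rw [h_neg _ i hi, hgoalR, aux_Icc_eq_Ico, Finset.sum_congr rfl (fun j _ => key' j),
        aux_telescope f hi.le]
      abel
  -- part 2 : d ∘ h
  have part2 : ∀ ψ, circleDiff R (h ψ) = ψ := by
    intro ψ
    apply aux_lhom_ext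
    intro i
    rw [aux_circleDiff_apply]
    set f : ℤ → LaurentPolynomial R := fun j => T j * ψ (T (i - j)) with hf
    have hstep : ∀ j : ℤ, T 1 * (T j * ψ (T (i - 1 - j))) = f (j + 1) := by
      intro j
      simp only [hf]
      rw [← mul_assoc, ← T_add,
        show (1 + j : ℤ) = j + 1 by ring, show (i - 1 - j : ℤ) = i - (j + 1) by ring]
    have hf0 : f 0 = ψ (T i) := by
      simp only [hf]
      rw [T_zero, one_mul, sub_zero]
    have fold : ∀ a b : ℤ,
        ∑ j ∈ Finset.Ico a b, T j * ψ (T (i - j)) = ∑ j ∈ Finset.Ico a b, f j :=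
      fun a b => Finset.sum_congr rfl (fun j _ => by simp only [hf])
    rcases lt_trichotomy i 0 with hi | hi | hi
    · -- i < 0, so i - 1 < 0
      rw [h_neg _ i hi, h_neg _ (i - 1) (by omega), aux_Icc_eq_Ico, aux_Icc_eq_Ico,
        mul_neg, Finset.mul_sum, fold i 0,
        Finset.sum_congr rfl (fun j _ => hstep j),
        aux_sum_shift f (i - 1) 0, show (i - 1 + 1 : ℤ) = i by ring, zero_add,
        show (1 : ℤ) = 0 + 1 by norm_num, aux_sum_Ico_succ_top f (by omega), hf0]
      abel
    · -- i = 0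
      subst hi
      rw [h_nonneg _ 0 le_rfl, h_neg _ (0 - 1) (by norm_num)]
      rw [show (0 - 1 : ℤ) = -1 by norm_num, Finset.Ico_self, Finset.sum_empty,
        Finset.Icc_self, Finset.sum_singleton, show (-1 - (-1) : ℤ) = 0 by norm_num,
        zero_sub, mul_neg, neg_neg, ← mul_assoc, aux_T_one_neg_one, one_mul]
    · -- i > 0, so i - 1 ≥ 0
      rw [h_nonneg _ i (by omega), h_nonneg _ (i - 1) (by omega), Finset.mul_sum,
        fold 0 i, Finset.sum_congr rfl (fun j _ => hstep j),
        aux_sum_shift f 0 (i - 1), zero_add, show (i - 1 + 1 : ℤ) = i by ring]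
      have hsplit : ∑ j ∈ Finset.Ico (0 : ℤ) i, f j
          = f 0 + ∑ j ∈ Finset.Ico (1 : ℤ) i, f j := by
        rw [← Finset.sum_insert (f := f) (by simp)]
        congr 1
        ext x
        simp only [Finset.mem_insert, Finset.mem_Ico]
        omega
      rw [hsplit, hf0]
      abel
  -- multiplication operators are in the kernel
  have dmul : ∀ g : LaurentPolynomial R, circleDiff R (LinearMap.mulLeft R g) = 0 := by
    intro g
    apply LinearMap.ext
    intro x
    simp only [circleDiff, LinearMap.sub_apply, LinearMap.comp_apply,
      LinearMap.mulLeft_apply, LinearMap.zero_apply]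
    have : (T 1 : LaurentPolynomial R) * (g * (T (-1) * x)) = (T 1 * T (-1)) * (g * x) := by
      ring
    rw [this, aux_T_one_neg_one, one_mul, sub_self]
  have part4 : ∀ φ, circleDiff R φ = 0 → φ = LinearMap.mulLeft R (φ 1) := by
    intro φ hφ
    apply aux_lhom_ext
    intro i
    have hrec : ∀ j : ℤ, φ (T j) = T 1 * φ (T (j - 1)) := by
      intro j
      have := congrArg (fun m => m (T j)) hφ
      simp only [LinearMap.zero_apply] at this
      rw [aux_circleDiff_apply] at this
      linear_combination this
    have hT : ∀ j : ℤ, φ (T j) = T j * φ 1 := by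
      intro j
      induction j using Int.induction_on with
      | zero => simp [T_zero]
      | succ k ih =>
          have := hrec (k + 1)
          simp only [add_sub_cancel_right] at this
          rw [this, ih, ← mul_assoc, ← T_add, show (1 + (k : ℤ)) = (k : ℤ) + 1 by ring]
      | pred k ih =>
          have hstep : φ (T (-(k : ℤ) - 1)) = T (-1) * φ (T (-(k : ℤ))) := by
            have h1 := hrec (-(k : ℤ))
            have hmul := congrArg (fun x => T (-1) * x) h1
            rw [← mul_assoc] at hmul
            have h2 : (T (-1) : LaurentPolynomial R) * T 1 = 1 := by
              rw [← T_add]; norm_num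
            rw [h2, one_mul] at hmul
            exact hmul.symm
          rw [hstep, ih, ← mul_assoc, ← T_add, show (-1 + -(k : ℤ)) = -(k : ℤ) - 1 by ring]
    rw [hT i, LinearMap.mulLeft_apply, mul_comm]
  refine ⟨part1, part2, ?_, part4, fun ψ => ⟨h ψ, part2 ψ⟩⟩
  intro φ
  constructor
  · intro hφ; exact ⟨φ 1, part4 φ hφ⟩
  · rintro ⟨g, rfl⟩; exact dmul g
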